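/- Let A ≥ 1 be a natural number and let x be a real number with 0 < x < 1/2. Then 1/(1 − (1 − x)^A) ≥ 1/(A·x) − 1/A. -/
import Mathlib


/-- For a natural number `A ≥ 1` and `0 < x < 1/2`: `1/(1 − (1−x)^A) ≥ 1/(A·x) − 1/A`. -/
theorem stmt_14 (A : ℕ) (hA : 1 ≤ A) (x : ℝ) (hx : 0 < x) (hx1 : x < 1 / 2) :
    1 / ((A : ℝ) * x) - 1 / (A : ℝ) ≤ 1 / (1 - (1 - x) ^ A) := by
  have hxle : (1 : ℝ) - x < 1 := by linarith
  have hxnn : (0 : ℝ) ≤ 1 - x := by linarith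
  have hpos : 0 < 1 - (1 - x) ^ A := by
    have := pow_lt_one₀ hxnn hxle (by omega : A ≠ 0)
    linarith
  have hbern : (1 : ℝ) - A * x ≤ (1 - x) ^ A := by
    have := one_add_mul_le_pow (a := -x) (by linarith) A
    calc (1 : ℝ) - A * x = 1 + A * (-x) := by ring
    _ ≤ (1 + -x) ^ A := this
    _ = (1 - x) ^ A := by ring_nf
  have hAx : 0 < (A : ℝ) * x := by positivity
  have h2 : 1 - (1 - x) ^ A ≤ (A : ℝ) * x := by linarith
  have h3 : 1 / ((A : ℝ) * x) ≤ 1 / (1 - (1 - x) ^ A) :=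
    one_div_le_one_div_of_le hpos h2
  have hA0 : 0 < (A : ℝ) := by positivity
  have : 0 ≤ 1 / (A : ℝ) := by positivity
  linarith
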